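/- If λ and μ are strict partitions, then sort_1(λ,μ) and sort_2(λ,μ) are strict partitions. -/

import Mathlib

/-- A strict partition: a weakly decreasing list of nonnegative integers whose positive parts
are strictly decreasing (trailing zeros allowed). -/
def IsStrictPartition (l : List ℕ) : Prop :=
  l.Chain' fun a b => b ≤ a ∧ (0 < b → b < a)

/-- The sublist of entries in even positions (0-indexed): `(ν_1, ν_3, ν_5, …)` when the list
is `(ν_1, ν_2, ν_3, …)`. -/
def altEven : List ℕ → List ℕ
  | [] => []
  | [a] => [a]
  | a :: _ :: t => a :: altEven t

lemma altEven_head (c : ℕ) (t : List ℕ) : ∃ s, altEven (c :: t) = c :: s := by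
  cases t with
  | nil => exact ⟨[], rfl⟩
  | cons b t => exact ⟨altEven t, rfl⟩

lemma key : ∀ l : List ℕ, l.Pairwise (· ≥ ·) → (∀ a, 0 < a → l.count a ≤ 2) →
    IsStrictPartition (altEven l)
  | [], _, _ => by simp [IsStrictPartition, altEven, List.Chain']
  | [a], _, _ => by simp [IsStrictPartition, altEven, List.Chain']
  | a :: b :: t, hs, hc => by
    have iht : IsStrictPartition (altEven t) := by
      refine key t hs.tail.tail (fun x hx => ?_)
      have h1 : t.count x ≤ (a :: b :: t).count x := by
        simp [List.count_cons]; omega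
      exact le_trans h1 (hc x hx)
    cases t with
    | nil => simp [IsStrictPartition, altEven, List.Chain']
    | cons c t' =>
      obtain ⟨s, hse⟩ := altEven_head c t'
      show List.Chain' _ (a :: altEven (c :: t'))
      rw [hse, List.Chain', List.isChain_cons_cons]
      have hab : b ≤ a := List.rel_of_pairwise_cons hs (by simp)
      have hac : c ≤ a := List.rel_of_pairwise_cons hs (by simp)
      have hbc : c ≤ b := List.rel_of_pairwise_cons hs.tail (by simp)
      refine ⟨⟨hac, fun hc0 => ?_⟩, by rw [← hse]; exact iht⟩
      rcases lt_or_eq_of_le hac with h | h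
      · exact h
      · exfalso
        have hb : b = a := by omega
        have hcnt := hc a (h ▸ hc0)
        subst h hb
        simp [List.count_cons] at hcnt
      
lemma count_le_one (p : List ℕ) (hp : IsStrictPartition p) (a : ℕ) (ha : 0 < a) :
    p.count a ≤ 1 := by
  by_contra h
  push_neg at h
  have hdup : List.Duplicate a p := List.duplicate_iff_two_le_count.mpr h
  have hsub : List.Sublist [a, a] p := List.duplicate_iff_sublist.mp hdup
  haveI : IsTrans ℕ (fun a b => b ≤ a ∧ (0 < b → b < a)) :=
    ⟨fun x y z hxy hyz => ⟨le_trans hyz.1 hxy.1, fun h0 => lt_of_lt_of_le (hyz.2 h0) hxy.1⟩⟩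
  have hpw : p.Pairwise (fun a b => b ≤ a ∧ (0 < b → b < a)) :=
    List.isChain_iff_pairwise.mp hp
  have := (hpw.sublist hsub)
  simp at this
  omega

theorem strict_sorts (l m : List ℕ) (hl : IsStrictPartition l) (hm : IsStrictPartition m) :
    IsStrictPartition (altEven (List.insertionSort (· ≥ ·) (l ++ m))) ∧
    IsStrictPartition (altEven (List.insertionSort (· ≥ ·) (l ++ m)).tail) := by
  set ν := List.insertionSort (· ≥ ·) (l ++ m) with hν
  have hsort : ν.Pairwise (· ≥ ·) := List.pairwise_insertionSort _ _
  have hcnt : ∀ a, 0 < a → ν.count a ≤ 2 := by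
    intro a ha
    have hp := (List.perm_insertionSort (· ≥ ·) (l ++ m)).count_eq a
    rw [← hν] at hp
    rw [hp, List.count_append]
    have := count_le_one l hl a ha
    have := count_le_one m hm a ha
    omega
  refine ⟨key ν hsort hcnt, key ν.tail hsort.tail ?_⟩
  · intro a ha
    exact le_trans (ν.tail_sublist.count_le a) (hcnt a ha)
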